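/- arXiv:1309.3445 — 2 statements merged into one kernel-verified Lean document; each statement's English description precedes it below -/
import Mathlib

section
/- (Halting Dichotomy, Lemma 3.4) Let N be an abelian network with total alphabet A, and fix an initial state x.q. Then exactly one of the following holds: (1) there does not exist a finite complete execution for x.q; or (2) every legal execution for x.q is finite (indeed of length at most that of any complete execution), and any two complete legal executions w, w' for x.q satisfy |w| = |w'| in ℕ^A. -/
/-- The letter-count vector `|w| ∈ ℕ^A` of a word `w ∈ A^*`. -/
def lc {A : Type*} [DecidableEq A] (w : List A) : A → ℕ := fun a => w.count a

/-- An abelian-network *data* structure on a directed graph with vertex set `V`, edge set `E`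
(with source and target maps, allowing loops and multiple edges), total alphabet
`A = ⊔_v A_v` (the letter `a` belongs to the alphabet of the vertex `loc a`), and
state space `Q v` for the processor at vertex `v`.  The abelian hypothesis on the
processors is the separate predicate `AbelianNetwork.IsAbelian`. -/
structure AbelianNetwork (V E A : Type*) (Q : V → Type*) [DecidableEq V] [DecidableEq A] where
  /-- source of an edge -/
  src : E → V
  /-- target of an edge -/
  tgt : E → V
  /-- the vertex whose input alphabet contains the letter `a` -/
  loc : A → V
  /-- the (finitely many) outgoing edges of each vertex -/
  outEdges : V → Finset E
  mem_outEdges : ∀ (e : E) (v : V), e ∈ outEdges v ↔ src e = v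
  /-- single-letter transition function `T_v(a, ·)` of the processor at `v = loc a` -/
  trans : (a : A) → Q (loc a) → Q (loc a)
  /-- message-passing function: the word sent along the edge `e` (with `src e = loc a`)
  when the processor at `loc a` processes the letter `a` in state `q` -/
  msg : (e : E) → (a : A) → Q (loc a) → List A
  /-- letters sent along `e` belong to the alphabet of the target of `e` -/
  msg_tgt : ∀ (e : E) (a : A) (q : Q (loc a)), src e = loc a → ∀ b ∈ msg e a q, loc b = tgt e

namespace AbelianNetwork

variable {V E A : Type*} {Q : V → Type*} [DecidableEq V] [DecidableEq A]
variable (N : AbelianNetwork V E A Q)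

/-- The map `t_a : Q → Q` updating the `loc a` coordinate by `T_{loc a}(a, ·)` and
fixing all other coordinates. -/
def tact (a : A) (q : ∀ v, Q v) : ∀ v, Q v :=
  Function.update q (N.loc a) (N.trans a (q (N.loc a)))

/-- `t_w = t_{w_r} ∘ ⋯ ∘ t_{w_1}` for a word `w = w_1 ⋯ w_r`. -/
def tword (w : List A) (q : ∀ v, Q v) : ∀ v, Q v :=
  w.foldl (fun q a => N.tact a q) q

/-- The word sent along the edge `e` when the letters of `w` are processed in order,
starting from the global state `q`.  (Extends the message-passing functions to words.) -/
def msgword (e : E) : List A → (∀ v, Q v) → List A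
  | [], _ => []
  | a :: w, q =>
      (if N.src e = N.loc a then N.msg e a (q (N.loc a)) else []) ++ msgword e w (N.tact a q)

/-- `N(a, q_{loc a}) ∈ ℕ^A`: the vector counting the letters produced when the processor at
`loc a` processes the letter `a`, summed over the outgoing edges of `loc a`. -/
def Nletter (a : A) (q : ∀ v, Q v) : A → ℕ := fun b =>
  ∑ e ∈ N.outEdges (N.loc a), (N.msg e a (q (N.loc a))).count b

/-- `N(w, q) = ∑_i N(w_i, q^{i-1}_{v(i)})` for a word `w = w_1 ⋯ w_r`. -/
def Nword : List A → (∀ v, Q v) → A → ℕ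
  | [], _ => fun _ => 0
  | a :: w, q => fun b => N.Nletter a q b + Nword w (N.tact a q) b

/-- The network is *abelian*: permuting a word input to a single processor does not change
the resulting state and changes each output word only by permuting its letters. -/
def IsAbelian : Prop :=
  ∀ (v : V) (w w' : List A), (∀ a ∈ w, N.loc a = v) → (∀ a ∈ w', N.loc a = v) →
    (w : Multiset A) = (w' : Multiset A) →
    ∀ q : ∀ u, Q u,
      N.tword w q = N.tword w' q ∧
      ∀ e : E, ((N.msgword e w q : Multiset A) = (N.msgword e w' q : Multiset A))

/-- The state transition `π_a(x.q) = (x - 1_a + N(a, q_{loc a})).t_a(q)` of the whole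
network, viewed as a single automaton with states `x.q ∈ ℤ^A × Q`. -/
def piLetter (a : A) (s : (A → ℤ) × (∀ v, Q v)) : (A → ℤ) × (∀ v, Q v) :=
  (fun b => s.1 b - (if b = a then 1 else 0) + (N.Nletter a s.2 b : ℤ), N.tact a s.2)

/-- `π_w = π_{w_r} ∘ ⋯ ∘ π_{w_1}`. -/
def piWord (w : List A) (s : (A → ℤ) × (∀ v, Q v)) : (A → ℤ) × (∀ v, Q v) :=
  w.foldl (fun s a => N.piLetter a s) s

/-- The word `w` is a *legal execution* from `x.q`: each letter is a legal move
(`x_a ≥ 1`) from the state obtained by executing the previous letters. -/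
def Legal : List A → ((A → ℤ) × (∀ v, Q v)) → Prop
  | [], _ => True
  | a :: w, s => 1 ≤ s.1 a ∧ Legal w (N.piLetter a s)

/-- The word `w` is a *complete execution* from `x.q`: after executing `w`,
no letters remain to be processed. -/
def Complete (w : List A) (s : (A → ℤ) × (∀ v, Q v)) : Prop :=
  ∀ a : A, (N.piWord w s).1 a ≤ 0

/-- A canonical word with letter-count vector `u ∈ ℕ^A`. -/
noncomputable def vecWord [Fintype A] (u : A → ℕ) : List A :=
  (Finset.univ : Finset A).toList.flatMap fun a => List.replicate (u a) a

/-- `N(u, q)` for a vector `u ∈ ℕ^A`, defined as `N(w, q)` for a word `w` with `|w| = u`. -/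
noncomputable def Nvec [Fintype A] (u : A → ℕ) (q : ∀ v, Q v) : A → ℕ := N.Nword (vecWord u) q

end AbelianNetwork

namespace AbelianNetwork

variable {V E A : Type*} {Q : V → Type*} [DecidableEq V] [DecidableEq A]
variable (N : AbelianNetwork V E A Q)

lemma tact_apply_ne (a : A) (q : ∀ v, Q v) {v : V} (h : v ≠ N.loc a) :
    N.tact a q v = q v := Function.update_of_ne h _ _

lemma Nletter_tact_ne {a b : A} (h : N.loc a ≠ N.loc b) (q : ∀ v, Q v) :
    N.Nletter a (N.tact b q) = N.Nletter a q := by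
  unfold Nletter
  rw [N.tact_apply_ne b q h]

lemma msgword_pair (e : E) (c d : A) (q : ∀ v, Q v) :
    N.msgword e [c, d] q =
      (if N.src e = N.loc c then N.msg e c (q (N.loc c)) else []) ++
      ((if N.src e = N.loc d then N.msg e d (N.tact c q (N.loc d)) else []) ++ []) := rfl

lemma sum_count_pair (c d : A) (q : ∀ v, Q v) (b' : A)
    (hc : N.loc c = N.loc c) (hd : N.loc d = N.loc c) :
    ∑ e ∈ N.outEdges (N.loc c), (N.msgword e [c, d] q).count b'
      = N.Nletter c q b' + N.Nletter d (N.tact c q) b' := by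
  unfold Nletter
  rw [show N.outEdges (N.loc d) = N.outEdges (N.loc c) from by rw [hd],
    ← Finset.sum_add_distrib]
  refine Finset.sum_congr rfl fun e he => ?_
  have hse : N.src e = N.loc c := (N.mem_outEdges e _).1 he
  rw [msgword_pair, if_pos hse, if_pos (hse.trans hd.symm)]
  simp [List.count_append]

lemma piLetter_comm (hN : N.IsAbelian) (a b : A) (s : (A → ℤ) × (∀ v, Q v)) :
    N.piLetter a (N.piLetter b s) = N.piLetter b (N.piLetter a s) := by
  obtain ⟨x, q⟩ := s
  have main : N.tact a (N.tact b q) = N.tact b (N.tact a q) ∧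
      ∀ b' : A, N.Nletter b q b' + N.Nletter a (N.tact b q) b'
        = N.Nletter a q b' + N.Nletter b (N.tact a q) b' := by
    by_cases h : N.loc a = N.loc b
    · obtain ⟨ht, hm⟩ := hN (N.loc a) [a, b] [b, a]
        (by simp [h]) (by simp [h]) (Multiset.coe_eq_coe.mpr (List.Perm.swap b a [])) q
      constructor
      · have : N.tact b (N.tact a q) = N.tact a (N.tact b q) := by
          simpa [tword] using ht
        exact this.symm
      · intro b'
        have hcnt : ∀ e, (N.msgword e [a, b] q).count b'
            = (N.msgword e [b, a] q).count b' := by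
          intro e
          have := congrArg (Multiset.count b') (hm e)
          simpa using this
        have hsum := Finset.sum_congr rfl fun e (_ : e ∈ N.outEdges (N.loc a)) => hcnt e
        rw [N.sum_count_pair a b q b' rfl h.symm,
          show (∑ e ∈ N.outEdges (N.loc a), (N.msgword e [b, a] q).count b')
            = ∑ e ∈ N.outEdges (N.loc b), (N.msgword e [b, a] q).count b' from by rw [h],
          N.sum_count_pair b a q b' rfl h] at hsum
        omega
    · constructor
      · unfold tact
        rw [Function.update_of_ne h, Function.update_of_ne (Ne.symm h)]
        exact Function.update_comm (Ne.symm h) _ _ _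
      · intro b'
        rw [N.Nletter_tact_ne h q, N.Nletter_tact_ne (Ne.symm h) q]
        omega
  refine Prod.ext ?_ main.1
  funext b'
  have hz : (N.Nletter b q b' : ℤ) + N.Nletter a (N.tact b q) b'
      = N.Nletter a q b' + N.Nletter b (N.tact a q) b' := by
    exact_mod_cast congrArg Nat.cast (main.2 b')
  show x b' - _ + _ - _ + (N.Nletter a (N.tact b q) b' : ℤ)
      = x b' - _ + _ - _ + (N.Nletter b (N.tact a q) b' : ℤ)
  linarith

lemma piWord_cons (a : A) (w : List A) (s : (A → ℤ) × (∀ v, Q v)) :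
    N.piWord (a :: w) s = N.piWord w (N.piLetter a s) := rfl

lemma piWord_perm (hN : N.IsAbelian) {w w' : List A} (h : w.Perm w') :
    ∀ s, N.piWord w s = N.piWord w' s := by
  induction h with
  | nil => intro s; rfl
  | cons a h ih => intro s; rw [piWord_cons, piWord_cons, ih]
  | swap a b l =>
      intro s
      rw [piWord_cons, piWord_cons, piWord_cons, piWord_cons, N.piLetter_comm hN]
  | trans h1 h2 ih1 ih2 => intro s; rw [ih1, ih2]

lemma piWord_fst_ge (w : List A) (s : (A → ℤ) × (∀ v, Q v)) (b : A) :
    s.1 b - (w.count b : ℤ) ≤ (N.piWord w s).1 b := by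
  induction w generalizing s with
  | nil => simp [piWord]
  | cons a w ih =>
      have h1 := ih (N.piLetter a s)
      have hN0 : (0 : ℤ) ≤ (N.Nletter a s.2 b : ℤ) := Int.natCast_nonneg _
      have hfst : (N.piLetter a s).1 b
          = s.1 b - (if b = a then 1 else 0) + (N.Nletter a s.2 b : ℤ) := rfl
      have hc : (((a :: w).count b : ℤ))
          = (w.count b : ℤ) + (if b = a then 1 else 0) := by
        by_cases hba : b = a
        · subst hba; simp [List.count_cons]
        · simp [List.count_cons, hba, Ne.symm hba]
      rw [piWord_cons]
      linarith

lemma key_le (hN : N.IsAbelian) :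
    ∀ (w w' : List A) (s : (A → ℤ) × (∀ v, Q v)),
      N.Legal w s → N.Complete w' s → (↑w : Multiset A) ≤ (↑w' : Multiset A) := by
  intro w
  induction w with
  | nil => intro w' s _ _; simp
  | cons a w₁ ih =>
      intro w' s hl hc
      obtain ⟨ha, hw⟩ := hl
      have hge := N.piWord_fst_ge w' s a
      have hle := hc a
      have hmem : a ∈ w' := by
        rw [← List.count_pos_iff]
        by_contra hcon
        push_neg at hcon
        interval_cases h : w'.count a
        · simp [h] at hge; linarith
      have hperm : w'.Perm (a :: w'.erase a) := List.perm_cons_erase hmem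
      have hc' : N.Complete (w'.erase a) (N.piLetter a s) := by
        intro b
        have := hc b
        rwa [N.piWord_perm hN hperm, piWord_cons] at this
      have hle₁ := ih (w'.erase a) (N.piLetter a s) hw hc'
      calc (↑(a :: w₁) : Multiset A) = a ::ₘ ↑w₁ := rfl
        _ ≤ a ::ₘ ↑(w'.erase a) := Multiset.cons_le_cons a hle₁
        _ = ↑(a :: w'.erase a) := rfl
        _ = ↑w' := Multiset.coe_eq_coe.mpr hperm.symm

end AbelianNetwork

/-- **Halting Dichotomy (Lemma 3.4).** For an abelian network with initial state `x.q`,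
exactly one of the following holds: (1) there is no finite complete execution for `x.q`;
or (2) a complete execution exists, every legal execution has length at most that of any
complete execution, and any two complete legal executions `w, w'` satisfy `|w| = |w'|`. -/
theorem AbelianNetwork.halting_dichotomy {V E A : Type*} {Q : V → Type*}
    [DecidableEq V] [DecidableEq A] (N : AbelianNetwork V E A Q) (hN : N.IsAbelian)
    (x : A → ℤ) (q : ∀ v, Q v) :
    Xor'
      (¬ ∃ w : List A, N.Complete w (x, q))
      ((∃ w : List A, N.Complete w (x, q)) ∧
        (∀ w w' : List A, N.Legal w (x, q) → N.Complete w' (x, q) →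
          w.length ≤ w'.length) ∧
        (∀ w w' : List A, N.Legal w (x, q) → N.Complete w (x, q) →
          N.Legal w' (x, q) → N.Complete w' (x, q) → lc w = lc w')) := by
  by_cases hP : ∃ w : List A, N.Complete w (x, q)
  · refine Or.inr ⟨⟨hP, ?_, ?_⟩, fun h => h hP⟩
    · intro w w' hl hcw'
      have h := N.key_le hN w w' (x, q) hl hcw'
      have := Multiset.card_le_card h
      simpa using this
    · intro w w' hlw hcw hlw' hcw'
      have h1 := N.key_le hN w w' (x, q) hlw hcw'
      have h2 := N.key_le hN w' w (x, q) hlw' hcw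
      have heq : (↑w : Multiset A) = ↑w' := le_antisymm h1 h2
      funext a
      show w.count a = w'.count a
      have := congrArg (Multiset.count a) heq
      simpa using this
  · exact Or.inl ⟨hP, fun h => hP h.1⟩
end

section
/- (Characterization of complete executions) Let N be an abelian network with finite total alphabet A. Fix x ∈ ℕ^A and q ∈ Q, and define F : ℕ^A → ℕ^A by F(u) = x + N(u,q), where N(u,q) := N(w,q) for any word w with |w| = u (well-defined by the abelian property). Then a word w ∈ A^* is a complete execution for x.q if and only if F(|w|) ≤ |w|. Moreover F is nondecreasing. -/
namespace AbelianNetwork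

variable {V E A : Type*} {Q : V → Type*} [DecidableEq V] [DecidableEq A]
variable (N : AbelianNetwork V E A Q)

lemma Nletter_congr (a : A) {q q' : ∀ v, Q v} (h : q (N.loc a) = q' (N.loc a)) :
    N.Nletter a q = N.Nletter a q' := by
  unfold Nletter; rw [h]

lemma swap_pair (hN : N.IsAbelian) (a b : A) (q : ∀ v, Q v) :
    N.tact b (N.tact a q) = N.tact a (N.tact b q) ∧
    ∀ c, N.Nletter a q c + N.Nletter b (N.tact a q) c
       = N.Nletter b q c + N.Nletter a (N.tact b q) c := by
  by_cases h : N.loc a = N.loc b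
  · obtain ⟨ht, hm⟩ := hN (N.loc a) [a, b] [b, a] (by simp [h]) (by simp [h])
      (Multiset.coe_eq_coe.2 (List.Perm.swap a b []).symm) q
    refine ⟨ht, fun c => ?_⟩
    have key : ∀ e : E, e ∈ N.outEdges (N.loc a) →
        (N.msg e a (q (N.loc a))).count c + (N.msg e b ((N.tact a q) (N.loc b))).count c
      = (N.msg e b (q (N.loc b))).count c + (N.msg e a ((N.tact b q) (N.loc a))).count c := by
      intro e he
      have hsa : N.src e = N.loc a := (N.mem_outEdges e _).1 he
      have hsb : N.src e = N.loc b := hsa.trans h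
      have := congrArg (Multiset.count c) (hm e)
      simpa [msgword, hsa, hsb, h] using this
    have hout : N.outEdges (N.loc b) = N.outEdges (N.loc a) := by rw [h]
    unfold Nletter
    rw [hout, ← Finset.sum_add_distrib, ← Finset.sum_add_distrib]
    exact Finset.sum_congr rfl key
  · have hba : N.loc b ≠ N.loc a := fun e => h e.symm
    have h1 : (N.tact a q) (N.loc b) = q (N.loc b) := N.tact_apply_ne a q hba
    have h2 : (N.tact b q) (N.loc a) = q (N.loc a) := N.tact_apply_ne b q h
    constructor
    · unfold tact
      rw [Function.update_of_ne hba, Function.update_of_ne h]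
      exact Function.update_comm h _ _ q
    · intro c
      rw [N.Nletter_congr a h2.symm, N.Nletter_congr b h1.symm, add_comm]

lemma perm_invariant (hN : N.IsAbelian) {w w' : List A} (h : w.Perm w') :
    ∀ q : ∀ v, Q v, N.tword w q = N.tword w' q ∧ N.Nword w q = N.Nword w' q := by
  induction h with
  | nil => intro q; exact ⟨rfl, rfl⟩
  | cons a h ih =>
      intro q
      obtain ⟨h1, h2⟩ := ih (N.tact a q)
      refine ⟨h1, ?_⟩
      show (fun b => N.Nletter a q b + N.Nword _ (N.tact a q) b) = _
      rw [h2]; rfl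
  | swap a b l =>
      intro q
      obtain ⟨hs, hn⟩ := N.swap_pair hN b a q
      constructor
      · show N.tword l (N.tact a (N.tact b q)) = N.tword l (N.tact b (N.tact a q))
        rw [hs]
      · funext c
        show N.Nletter b q c + (N.Nletter a (N.tact b q) c + N.Nword l (N.tact a (N.tact b q)) c)
           = N.Nletter a q c + (N.Nletter b (N.tact a q) c + N.Nword l (N.tact b (N.tact a q)) c)
        rw [hs, ← add_assoc, ← add_assoc, hn c]
  | trans h1 h2 ih1 ih2 =>
      intro q
      exact ⟨(ih1 q).1.trans (ih2 q).1, (ih1 q).2.trans (ih2 q).2⟩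

lemma Nword_append (l₁ l₂ : List A) (q : ∀ v, Q v) :
    N.Nword (l₁ ++ l₂) q = fun b => N.Nword l₁ q b + N.Nword l₂ (N.tword l₁ q) b := by
  induction l₁ generalizing q with
  | nil => funext b; simp [Nword, tword]
  | cons a l ih =>
      funext b
      show N.Nletter a q b + N.Nword (l ++ l₂) (N.tact a q) b = _
      rw [ih]
      show _ = N.Nletter a q b + N.Nword l (N.tact a q) b + N.Nword l₂ (N.tword (a :: l) q) b
      have : N.tword (a :: l) q = N.tword l (N.tact a q) := rfl
      rw [this, add_assoc]

lemma count_vecWord [Fintype A] (u : A → ℕ) (a : A) : (vecWord u).count a = u a := by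
  unfold vecWord
  rw [List.count_flatMap]
  rw [show (List.count a ∘ fun b => List.replicate (u b) b) = fun b => if a = b then u b else 0 from
    funext fun b => by
      by_cases hab : a = b
      · subst hab; simp [List.count_replicate_self]
      · simp [hab, List.count_eq_zero, fun h => hab (List.eq_of_mem_replicate h)]]
  rw [Finset.sum_map_toList]
  simp

lemma lc_vecWord [Fintype A] (u : A → ℕ) : lc (vecWord u) = u := by
  funext a; exact count_vecWord u a

lemma perm_vecWord_lc [Fintype A] (w : List A) : w.Perm (vecWord (lc w)) := by
  rw [List.perm_iff_count]
  intro a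
  rw [count_vecWord]; rfl

lemma piWord_eq (w : List A) (s : (A → ℤ) × (∀ v, Q v)) :
    N.piWord w s = (fun b => s.1 b - (w.count b : ℤ) + (N.Nword w s.2 b : ℤ), N.tword w s.2) := by
  induction w generalizing s with
  | nil => simp [piWord, Nword, tword]
  | cons a w ih =>
      show N.piWord w (N.piLetter a s) = _
      rw [ih]
      have h2 : N.tword w (N.piLetter a s).2 = N.tword (a :: w) s.2 := rfl
      rw [h2]
      refine Prod.ext ?_ rfl
      funext b
      show (N.piLetter a s).1 b - (w.count b : ℤ) + (N.Nword w (N.tact a s.2) b : ℤ)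
        = s.1 b - ((a :: w).count b : ℤ) + (N.Nword (a :: w) s.2 b : ℤ)
      have hc : (a :: w).count b = w.count b + (if b = a then 1 else 0) := by
        rw [List.count_cons]
        by_cases hba : b = a
        · subst hba; simp
        · have hab : a ≠ b := fun h => hba h.symm
          simp [hba, hab]
      have hn : N.Nword (a :: w) s.2 b = N.Nletter a s.2 b + N.Nword w (N.tact a s.2) b := rfl
      show s.1 b - (if b = a then 1 else 0) + (N.Nletter a s.2 b : ℤ) - (w.count b : ℤ)
            + (N.Nword w (N.tact a s.2) b : ℤ) = _
      rw [hc, hn]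
      push_cast
      ring


end AbelianNetwork

/-- **Characterization of complete executions.** Let `N` be an abelian network with finite
total alphabet `A`, fix `x ∈ ℕ^A` and `q ∈ Q`, and define `F : ℕ^A → ℕ^A` by
`F(u) = x + N(u,q)`, where `N(u,q) := N(w,q)` for any word `w` with `|w| = u` (this is
well-defined by the abelian property).  Then a word `w` is a complete execution for `x.q`
if and only if `F(|w|) ≤ |w|`.  Moreover `F` is nondecreasing. -/
theorem AbelianNetwork.complete_iff_feasible {V E A : Type*} {Q : V → Type*}
    [DecidableEq V] [DecidableEq A] [Fintype A]
    (N : AbelianNetwork V E A Q) (hN : N.IsAbelian) (x : A → ℕ) (q : ∀ v, Q v) :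
    (∀ w : List A, N.Nword w q = N.Nvec (lc w) q) ∧
    (∀ w : List A,
      N.Complete w (fun a => (x a : ℤ), q) ↔ (fun a => x a + N.Nvec (lc w) q a) ≤ lc w) ∧
    Monotone (fun u : A → ℕ => fun a => x a + N.Nvec u q a) := by
  have key : ∀ w : List A, N.Nword w q = N.Nvec (lc w) q := fun w =>
    (N.perm_invariant hN (perm_vecWord_lc w) q).2
  refine ⟨key, fun w => ?_, ?_⟩
  · unfold Complete
    rw [N.piWord_eq]
    simp only [← key w]
    constructor
    · intro h a
      have := h a
      simp only [Pi.le_def] at this ⊢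
      show x a + N.Nword w q a ≤ lc w a
      have hlc : lc w a = w.count a := rfl
      omega
    · intro h a
      have := h a
      show (x a : ℤ) - (w.count a : ℤ) + (N.Nword w q a : ℤ) ≤ 0
      have hlc : lc w a = w.count a := rfl
      simp only [Pi.le_def] at this
      omega
  · intro u u' huu'
    intro a
    show x a + N.Nvec u q a ≤ x a + N.Nvec u' q a
    have hsplit : N.Nvec u' q = fun b => N.Nvec u q b
        + N.Nword (vecWord (fun c => u' c - u c)) (N.tword (vecWord u) q) b := by
      have hperm : (vecWord u').Perm (vecWord u ++ vecWord (fun c => u' c - u c)) := by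
        rw [List.perm_iff_count]
        intro c
        rw [count_vecWord, List.count_append, count_vecWord, count_vecWord]
        have := Pi.le_def.mp huu' c
        omega
      have := (N.perm_invariant hN hperm q).2
      unfold Nvec
      rw [this, N.Nword_append]
    rw [hsplit]
    exact Nat.add_le_add_left (Nat.le_add_right _ _) _
end
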